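/- The sequence q_0 = 1, q_{k+1} = 1 + ρq_k/(1 + ρq_k·c) converges to the unique positive fixed point Q* = (1/2)(1 - (1-ρ)/(ρc) + √((1 - (1-ρ)/(ρc))² + 4/(ρc))). -/

import Mathlib

theorem stmt_4 (ρ c : ℝ) (hρ : ρ ∈ Set.Ioo (0:ℝ) 1) (hc : 0 < c)
    (q : ℕ → ℝ) (h0 : q 0 = 1)
    (hrec : ∀ k, q (k+1) = 1 + ρ * q k / (1 + ρ * q k * c)) :
    Filter.Tendsto q Filter.atTop
      (nhds ((1/2) * (1 - (1-ρ)/(ρ*c) + Real.sqrt ((1 - (1-ρ)/(ρ*c))^2 + 4/(ρ*c))))) := by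
  obtain ⟨hρ0, hρ1⟩ := hρ
  have hρc : 0 < ρ * c := mul_pos hρ0 hc
  -- all terms are ≥ 1
  have hge1 : ∀ k, 1 ≤ q k := by
    intro k
    induction k with
    | zero => simp [h0]
    | succ n ih =>
      rw [hrec]
      have hden : 0 < 1 + ρ * q n * c := by nlinarith
      have : 0 ≤ ρ * q n / (1 + ρ * q n * c) := by positivity
      linarith
  -- denominators positive
  have hden : ∀ k, 0 < 1 + ρ * q k * c := by
    intro k; have := hge1 k; nlinarith
  -- bounded above by 1 + 1/c
  have hbdd : ∀ k, q k ≤ 1 + 1 / c := by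
    intro k
    cases k with
    | zero =>
      rw [h0]; have : 0 < 1 / c := by positivity
      linarith
    | succ n =>
      rw [hrec]
      have h1 : ρ * q n / (1 + ρ * q n * c) ≤ 1 / c := by
        rw [div_le_div_iff₀ (hden n) hc]
        have := hge1 n; nlinarith
      linarith
  -- monotone
  have hstep : ∀ k, q k ≤ q (k + 1) := by
    intro k
    induction k with
    | zero =>
      rw [hrec, h0]
      have : 0 ≤ ρ * 1 / (1 + ρ * 1 * c) := by positivity
      linarith
    | succ n ih =>
      rw [hrec n, hrec (n+1)]
      have h1 := hge1 n
      have h2 := hge1 (n+1)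
      have d1 := hden n
      have d2 := hden (n+1)
      have : ρ * q n / (1 + ρ * q n * c) ≤ ρ * q (n+1) / (1 + ρ * q (n+1) * c) := by
        rw [div_le_div_iff₀ d1 d2]
        nlinarith
      linarith
  have hmono : Monotone q := monotone_nat_of_le_succ hstep
  have hbddA : BddAbove (Set.range q) := ⟨1 + 1/c, by rintro x ⟨k, rfl⟩; exact hbdd k⟩
  set L := ⨆ k, q k with hL
  have htend : Filter.Tendsto q Filter.atTop (nhds L) := tendsto_atTop_ciSup hmono hbddA
  have hL1 : 1 ≤ L := by
    have := le_ciSup hbddA 0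
    rw [h0] at this; exact this
  have hdenL : 0 < 1 + ρ * L * c := by nlinarith
  -- fixed point equation
  have hfix : L = 1 + ρ * L / (1 + ρ * L * c) := by
    have h1 : Filter.Tendsto (fun k => q (k+1)) Filter.atTop (nhds L) :=
      htend.comp (Filter.tendsto_add_atTop_nat 1)
    have h2 : Filter.Tendsto (fun k => 1 + ρ * q k / (1 + ρ * q k * c)) Filter.atTop
        (nhds (1 + ρ * L / (1 + ρ * L * c))) := by
      apply Filter.Tendsto.add tendsto_const_nhds
      exact ((tendsto_const_nhds.mul htend).div
        (tendsto_const_nhds.add ((tendsto_const_nhds.mul htend).mul tendsto_const_nhds))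
        (ne_of_gt hdenL))
    have h3 : Filter.Tendsto (fun k => q (k+1)) Filter.atTop
        (nhds (1 + ρ * L / (1 + ρ * L * c))) := by
      simpa only [hrec] using h2
    exact tendsto_nhds_unique h1 h3
  -- identify L with the closed form
  set a : ℝ := 1 - (1-ρ)/(ρ*c) with ha
  have hs2 : Real.sqrt (a^2 + 4/(ρ*c)) ^ 2 = a^2 + 4/(ρ*c) := by
    rw [Real.sq_sqrt]; positivity
  set s : ℝ := Real.sqrt (a^2 + 4/(ρ*c)) with hs
  have hs0 : 0 ≤ s := Real.sqrt_nonneg _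
  -- quadratic for L
  have hquad : ρ * c * L^2 - ρ * c * a * L - 1 = 0 := by
    have h := hfix
    field_simp at h
    have hane : ρ * c * a = ρ * c - (1 - ρ) := by
      have hX : (1-ρ)/(ρ*c) * (ρ*c) = 1-ρ := div_mul_cancel₀ _ (ne_of_gt hρc)
      rw [ha]; linarith [hX]
    nlinarith [h, hane]
  have hsq : (2*L - a)^2 = s^2 := by
    rw [hs, hs2]
    have hX : ρ * c * ((2*L - a)^2 - (a^2 + 4/(ρ*c))) = 0 := by
      have h4 : ρ * c * ((2*L - a)^2 - (a^2 + 4/(ρ*c))) =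
          4 * (ρ * c * L^2 - ρ * c * a * L - 1) := by
        field_simp; ring
      rw [h4, hquad]; ring
    have := (mul_eq_zero.mp hX).resolve_left (ne_of_gt hρc)
    linarith
  have ha1 : a < 1 := by
    have hpos : 0 < (1-ρ)/(ρ*c) := div_pos (by linarith) hρc
    rw [ha]; linarith
  have h2La : 0 < 2*L - a := by linarith
  clear_value s
  clear_value a
  have hLs : 2*L - a = s := by
    nlinarith [hsq, hs0, h2La]
  have hLval : L = (1/2) * (a + s) := by linarith
  rw [← hLval]
  exact htend
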